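/- Let C = ΦΦᵀ + (ρ²/16)I where Φ ∈ R^{d×n}, ρ ∈ (0,1], θ ∈ R^d with ‖θ‖₂ ≤ 1. Suppose Q : indices → R and Y = Σᵢ φᵢ Qᵢ where |Qᵢ − θᵀφᵢ| ≤ δ for each column φᵢ of Φ. If n·δ² ≤ ρ²/16 (equivalently δ ≤ ρ/(4√n)), then for any (s,a)-feature x with xᵀC⁻¹x ≤ 1 and any target q with |q − θᵀx| ≤ δ, we have |xᵀC⁻¹Y − q| ≤ √n·δ + ρ/4 + δ ≤ ρ/2 whenever δ(√n + 1) ≤ ρ/4. -/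

import Mathlib

open Matrix

private lemma cs_dot {d : ℕ} (u v : Fin d → ℝ) :
    (u ⬝ᵥ v)^2 ≤ (u ⬝ᵥ u) * (v ⬝ᵥ v) := by
  simpa [dotProduct, sq] using Finset.sum_mul_sq_le_sq_mul_sq Finset.univ u v

private lemma cs_psd {d : ℕ} {M : Matrix (Fin d) (Fin d) ℝ} (hM : M.PosSemidef)
    (a b : Fin d → ℝ) :
    (a ⬝ᵥ M.mulVec b)^2 ≤ (a ⬝ᵥ M.mulVec a) * (b ⬝ᵥ M.mulVec b) := by
  open scoped MatrixOrder in
  set S := CFC.sqrt M with hSdef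
  open scoped MatrixOrder in
  have hSS : S * S = M := CFC.sqrt_mul_sqrt_self M hM.nonneg
  open scoped MatrixOrder in
  have hSym : Sᵀ = S := (CFC.sqrt_nonneg M).posSemidef.isHermitian
  have key : ∀ u v : Fin d → ℝ, u ⬝ᵥ M.mulVec v = (S.mulVec u) ⬝ᵥ (S.mulVec v) := by
    intro u v
    rw [← hSS, ← Matrix.mulVec_mulVec, Matrix.dotProduct_mulVec (A := S),
      ← Matrix.mulVec_transpose, hSym]
  rw [key, key, key]
  exact cs_dot _ _

theorem stmt_8 {d n : ℕ} (Φ : Matrix (Fin d) (Fin n) ℝ)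
    (ρ δ : ℝ) (hρ0 : 0 < ρ) (hρ1 : ρ ≤ 1) (hδ : 0 ≤ δ)
    (C : Matrix (Fin d) (Fin d) ℝ)
    (hC : C = Φ * Φᵀ + (ρ ^ 2 / 16) • (1 : Matrix (Fin d) (Fin d) ℝ))
    (θ : Fin d → ℝ) (hθ : ∑ i, (θ i) ^ 2 ≤ 1)
    (Q : Fin n → ℝ)
    (hQ : ∀ i, |Q i - θ ⬝ᵥ (fun j => Φ j i)| ≤ δ)
    (Y : Fin d → ℝ) (hY : Y = Φ.mulVec Q)
    (hnδ : (n : ℝ) * δ ^ 2 ≤ ρ ^ 2 / 16)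
    (hgap : δ * (Real.sqrt n + 1) ≤ ρ / 4)
    (x : Fin d → ℝ) (hx : x ⬝ᵥ C⁻¹.mulVec x ≤ 1)
    (q : ℝ) (hq : |q - θ ⬝ᵥ x| ≤ δ) :
    |x ⬝ᵥ C⁻¹.mulVec Y - q| ≤ Real.sqrt n * δ + ρ / 4 + δ ∧
      Real.sqrt n * δ + ρ / 4 + δ ≤ ρ / 2 := by
  have hsn : (0:ℝ) ≤ Real.sqrt n := Real.sqrt_nonneg _
  constructor
  swap
  · have h1 : δ * (Real.sqrt n + 1) = Real.sqrt n * δ + δ := by ring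
    linarith
  -- setup
  set lam : ℝ := ρ ^ 2 / 16 with hlam
  have hlam0 : 0 < lam := by rw [hlam]; positivity
  clear_value lam
  have hPSD : (Φ * Φᵀ).PosSemidef := by
    simpa using Matrix.posSemidef_self_mul_conjTranspose Φ
  have hIsd : (lam • (1 : Matrix (Fin d) (Fin d) ℝ)).PosDef := by
    rw [Matrix.smul_one_eq_diagonal]
    exact Matrix.posDef_diagonal_iff.mpr fun _ => hlam0
  have hCpd : C.PosDef := by
    rw [hC]; exact Matrix.PosDef.posSemidef_add hPSD hIsd
  have hCinv : C⁻¹.PosDef := hCpd.inv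
  have hCinvPSD : C⁻¹.PosSemidef := hCinv.posSemidef
  have hdet : IsUnit C.det := hCpd.det_pos.ne'.isUnit
  have hinvC : C⁻¹ * C = 1 := Matrix.nonsing_inv_mul C hdet
  have hCinv' : C * C⁻¹ = 1 := Matrix.mul_nonsing_inv C hdet
  -- decomposition Q = Φᵀ θ + ε
  set ε : Fin n → ℝ := fun i => Q i - θ ⬝ᵥ (fun j => Φ j i) with hεdef
  have hε : ∀ i, |ε i| ≤ δ := hQ
  have hQe : Q = fun i => (Φᵀ.mulVec θ) i + ε i := by
    funext i
    simp [hεdef, Matrix.mulVec, dotProduct, Matrix.transpose_apply, mul_comm]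
  set v : Fin d → ℝ := Φ.mulVec ε with hvdef
  have hYdec : Y = C.mulVec θ - lam • θ + v := by
    rw [hY, hQe]
    have : (fun i => (Φᵀ.mulVec θ) i + ε i) = Φᵀ.mulVec θ + ε := rfl
    rw [this, Matrix.mulVec_add, Matrix.mulVec_mulVec]
    rw [hC]
    funext j
    simp [Matrix.add_mulVec, Matrix.smul_mulVec, Matrix.one_mulVec, hvdef]
  have hCY : C⁻¹.mulVec Y = θ - lam • (C⁻¹.mulVec θ) + C⁻¹.mulVec v := by
    rw [hYdec, Matrix.mulVec_add, Matrix.mulVec_sub, Matrix.mulVec_mulVec, hinvC,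
      Matrix.one_mulVec, Matrix.mulVec_smul]
  -- the three scalar terms
  set T1 : ℝ := x ⬝ᵥ θ with hT1def
  set T2 : ℝ := x ⬝ᵥ C⁻¹.mulVec θ with hT2def
  set T3 : ℝ := x ⬝ᵥ C⁻¹.mulVec v with hT3def
  have hsplit : x ⬝ᵥ C⁻¹.mulVec Y = T1 - lam * T2 + T3 := by
    rw [hCY, dotProduct_add, dotProduct_sub, dotProduct_smul]
    simp [T1, T2, T3, smul_eq_mul]
  -- quadratic-form nonnegativity facts
  have hquadPSD : ∀ u : Fin d → ℝ, 0 ≤ u ⬝ᵥ (Φ * Φᵀ).mulVec u := by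
    intro u; simpa using hPSD.dotProduct_mulVec_nonneg u
  have hquadInv : ∀ u : Fin d → ℝ, 0 ≤ u ⬝ᵥ C⁻¹.mulVec u := by
    intro u; simpa using hCinvPSD.dotProduct_mulVec_nonneg u
  have hxx0 : 0 ≤ x ⬝ᵥ C⁻¹.mulVec x := hquadInv x
  -- norm of θ
  have hθθ : θ ⬝ᵥ θ ≤ 1 := by
    simpa [dotProduct, sq] using hθ
  have hθθ0 : 0 ≤ θ ⬝ᵥ θ := by
    simpa [dotProduct, sq] using Finset.sum_nonneg (fun i _ => sq_nonneg (θ i))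
  -- bound θ ⬝ C⁻¹ θ ≤ 1/lam
  have hbound1 : θ ⬝ᵥ C⁻¹.mulVec θ ≤ 1 / lam := by
    set u : Fin d → ℝ := C⁻¹.mulVec θ with hudef
    have hθu : θ = C.mulVec u := by
      rw [hudef, Matrix.mulVec_mulVec, hCinv', Matrix.one_mulVec]
    set t : ℝ := θ ⬝ᵥ u with htdef
    have ht0 : 0 ≤ t := hquadInv θ
    have htC : t = u ⬝ᵥ C.mulVec u := by
      rw [htdef]; nth_rewrite 1 [hθu]; exact dotProduct_comm _ _
    have hlow : lam * (u ⬝ᵥ u) ≤ t := by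
      rw [htC, hC, Matrix.add_mulVec, dotProduct_add, Matrix.smul_mulVec,
        Matrix.one_mulVec, dotProduct_smul, smul_eq_mul]
      have := hquadPSD u
      linarith
    set su : ℝ := u ⬝ᵥ u with hsudef
    have huu0 : 0 ≤ su := by
      rw [hsudef]
      simpa [dotProduct, sq] using Finset.sum_nonneg (fun i _ => mul_self_nonneg (u i))
    have ht2 : t ^ 2 ≤ su := by
      have h1 : t ^ 2 ≤ (θ ⬝ᵥ θ) * su := cs_dot θ u
      have h2 : (θ ⬝ᵥ θ) * su ≤ 1 * su := mul_le_mul_of_nonneg_right hθθ huu0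
      linarith
    clear_value t su
    rw [le_div_iff₀ hlam0]
    nlinarith [mul_le_mul_of_nonneg_left ht2 (le_of_lt (mul_pos hlam0 hlam0)),
      mul_le_mul_of_nonneg_left hlow hlam0.le]
  -- bound v ⬝ C⁻¹ v ≤ ε ⬝ ε ≤ n δ²
  have hE : ε ⬝ᵥ ε ≤ (n : ℝ) * δ ^ 2 := by
    have h1 : ∀ i, ε i * ε i ≤ δ ^ 2 := by
      intro i
      have h2 := hε i
      calc ε i * ε i = |ε i| * |ε i| := (abs_mul_abs_self _).symm
        _ ≤ δ * δ := mul_le_mul h2 h2 (abs_nonneg _) hδ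
        _ = δ ^ 2 := (sq δ).symm
    calc ε ⬝ᵥ ε = ∑ i, ε i * ε i := rfl
      _ ≤ ∑ _i : Fin n, δ ^ 2 := Finset.sum_le_sum (fun i _ => h1 i)
      _ = (n : ℝ) * δ ^ 2 := by simp [mul_comm]
  have hεε0 : 0 ≤ ε ⬝ᵥ ε := by
    simpa [dotProduct, sq] using Finset.sum_nonneg (fun i _ => mul_self_nonneg (ε i))
  have hbound2 : v ⬝ᵥ C⁻¹.mulVec v ≤ ε ⬝ᵥ ε := by
    set w : Fin d → ℝ := C⁻¹.mulVec v with hwdef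
    have hvw : v = C.mulVec w := by
      rw [hwdef, Matrix.mulVec_mulVec, hCinv', Matrix.one_mulVec]
    set s : ℝ := v ⬝ᵥ w with hsdef
    have hs0 : 0 ≤ s := hquadInv v
    set z : Fin n → ℝ := Φᵀ.mulVec w with hzdef
    have hsC : s = w ⬝ᵥ C.mulVec w := by
      rw [hsdef]; nth_rewrite 1 [hvw]; exact dotProduct_comm _ _
    have hzz : z ⬝ᵥ z ≤ s := by
      rw [hsC, hC, Matrix.add_mulVec, dotProduct_add, Matrix.smul_mulVec,
        Matrix.one_mulVec, dotProduct_smul, smul_eq_mul]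
      have hq1 : w ⬝ᵥ (Φ * Φᵀ).mulVec w = z ⬝ᵥ z := by
        rw [← Matrix.mulVec_mulVec, Matrix.dotProduct_mulVec (A := Φ), hzdef,
          Matrix.mulVec_transpose]
      have hww0 : 0 ≤ w ⬝ᵥ w := by
        simpa [dotProduct, sq] using Finset.sum_nonneg (fun i _ => mul_self_nonneg (w i))
      have := mul_nonneg hlam0.le hww0
      linarith
    have hsze : s = z ⬝ᵥ ε := by
      rw [hsdef, hvdef, dotProduct_comm, Matrix.dotProduct_mulVec (A := Φ), hzdef,
        Matrix.mulVec_transpose]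
    have hs2 : s * s ≤ s * (ε ⬝ᵥ ε) := by
      have h1 : s ^ 2 ≤ (z ⬝ᵥ z) * (ε ⬝ᵥ ε) := by rw [hsze]; exact cs_dot z ε
      have h2 : (z ⬝ᵥ z) * (ε ⬝ᵥ ε) ≤ s * (ε ⬝ᵥ ε) :=
        mul_le_mul_of_nonneg_right hzz hεε0
      have h3 : s ^ 2 = s * s := sq s
      linarith
    rcases eq_or_lt_of_le hs0 with h | h
    · rw [← h]; exact hεε0
    · exact le_of_mul_le_mul_left hs2 h
  -- bound |T2|
  have hT2sq : T2 ^ 2 ≤ 1 / lam := by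
    have h1 : T2 ^ 2 ≤ (x ⬝ᵥ C⁻¹.mulVec x) * (θ ⬝ᵥ C⁻¹.mulVec θ) := cs_psd hCinvPSD x θ
    have h2 : (x ⬝ᵥ C⁻¹.mulVec x) * (θ ⬝ᵥ C⁻¹.mulVec θ) ≤ 1 * (1 / lam) := by
      apply mul_le_mul hx hbound1 (hquadInv θ) (by linarith)
    linarith
  have hT2 : lam * |T2| ≤ ρ / 4 := by
    have h1 : (lam * |T2|) ^ 2 ≤ (ρ / 4) ^ 2 := by
      have h2 : (lam * |T2|)^2 = lam^2 * T2^2 := by rw [mul_pow, sq_abs]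
      have h3 : lam^2 * T2^2 ≤ lam^2 * (1/lam) := by
        apply mul_le_mul_of_nonneg_left hT2sq (sq_nonneg lam)
      have h4 : lam^2 * (1/lam) = lam := by
        field_simp [sq]
      have h5 : lam = (ρ/4)^2 := by rw [hlam]; ring
      linarith
    have ha : 0 ≤ lam * |T2| := mul_nonneg hlam0.le (abs_nonneg T2)
    have hb : (0:ℝ) ≤ ρ / 4 := by linarith
    exact (pow_le_pow_iff_left₀ ha hb two_ne_zero).mp h1
  -- bound |T3|
  have hT3 : |T3| ≤ Real.sqrt n * δ := by
    have h1 : T3 ^ 2 ≤ (x ⬝ᵥ C⁻¹.mulVec x) * (v ⬝ᵥ C⁻¹.mulVec v) := cs_psd hCinvPSD x v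
    have h2 : T3 ^ 2 ≤ (n : ℝ) * δ ^ 2 := by
      have h3 : (x ⬝ᵥ C⁻¹.mulVec x) * (v ⬝ᵥ C⁻¹.mulVec v) ≤ 1 * (ε ⬝ᵥ ε) := by
        apply mul_le_mul hx hbound2 (hquadInv v) (by linarith)
      linarith
    have h4 : (Real.sqrt n * δ) ^ 2 = (n : ℝ) * δ ^ 2 := by
      rw [mul_pow, Real.sq_sqrt (Nat.cast_nonneg n)]
    have h5 : |T3| ^ 2 ≤ (Real.sqrt n * δ) ^ 2 := by rw [sq_abs]; linarith
    exact (pow_le_pow_iff_left₀ (abs_nonneg T3) (mul_nonneg hsn hδ) two_ne_zero).mp h5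
  -- bound |T1 - q|
  have hT1 : |T1 - q| ≤ δ := by
    have : T1 - q = -(q - θ ⬝ᵥ x) := by
      rw [hT1def, dotProduct_comm]; ring
    rw [this, abs_neg]; exact hq
  -- combine
  rw [hsplit]
  have htri : |T1 - lam * T2 + T3 - q| ≤ |T1 - q| + lam * |T2| + |T3| := by
    have h1 : T1 - lam * T2 + T3 - q = (T1 - q) + (-(lam * T2)) + T3 := by ring
    rw [h1]
    calc |(T1 - q) + (-(lam * T2)) + T3| ≤ |(T1 - q) + (-(lam * T2))| + |T3| := abs_add_le _ _
      _ ≤ |T1 - q| + |(-(lam * T2))| + |T3| := by linarith [abs_add_le (T1 - q) (-(lam * T2))]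
      _ = |T1 - q| + lam * |T2| + |T3| := by
          rw [abs_neg, abs_mul, abs_of_nonneg hlam0.le]
  linarith
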